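/- Let g = g_{5,3,5(λ)}. For every F ∈ g*, the skew-symmetric bilinear form B_F has rank either 0 or 2; equivalently, the subspace {X ∈ g : F([X, Y]) = 0 for all Y ∈ g} has dimension 5 or 3. (This is the infinitesimal MD-condition: every coadjoint orbit of the corresponding connected simply connected Lie group G_{5,3,5(λ)} has dimension 0 or 2, so it is an MD5-group.) -/

import Mathlib

open scoped Matrix

def bracketg535 (l : ℝ) (U V : Fin 5 → ℝ) : Fin 5 → ℝ :=
  ![0, 0,
    (U 0 * V 1 - U 1 * V 0) + l * (U 1 * V 2 - U 2 * V 1),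
    (U 1 * V 3 - U 3 * V 1) + (U 1 * V 4 - U 4 * V 1),
    U 1 * V 4 - U 4 * V 1]

def BFg535 (l : ℝ) (F : Fin 5 → ℝ) : Matrix (Fin 5) (Fin 5) ℝ :=
  Matrix.of fun i j => F ⬝ᵥ bracketg535 l (Pi.single i 1) (Pi.single j 1)

def radg535 (l : ℝ) (F : Fin 5 → ℝ) : Submodule ℝ (Fin 5 → ℝ) where
  carrier := {X | ∀ Y : Fin 5 → ℝ, F ⬝ᵥ bracketg535 l X Y = 0}
  zero_mem' := by
    intro Y
    simp [bracketg535, dotProduct, Fin.sum_univ_five]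
  add_mem' := by
    intro a b ha hb Y
    have h1 := ha Y
    have h2 := hb Y
    simp only [bracketg535, dotProduct, Fin.sum_univ_five, Matrix.cons_val_zero,
      Matrix.cons_val_one, Matrix.head_cons, Matrix.cons_val_two, Matrix.tail_cons,
      Matrix.cons_val_three, Matrix.cons_val_four, Pi.add_apply] at h1 h2 ⊢
    linear_combination h1 + h2
  smul_mem' := by
    intro c a ha Y
    have h1 := ha Y
    simp only [bracketg535, dotProduct, Fin.sum_univ_five, Matrix.cons_val_zero,
      Matrix.cons_val_one, Matrix.head_cons, Matrix.cons_val_two, Matrix.tail_cons,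
      Matrix.cons_val_three, Matrix.cons_val_four, Pi.smul_apply, smul_eq_mul] at h1 ⊢
    linear_combination c * h1

def auxL (w0 w2 w3 w4 : ℝ) : (Fin 5 → ℝ) →ₗ[ℝ] (Fin 2 → ℝ) where
  toFun X := ![X 1, w0 * X 0 - w2 * X 2 - w3 * X 3 - w4 * X 4]
  map_add' X Y := by funext i; fin_cases i <;> simp <;> ring
  map_smul' c X := by funext i; fin_cases i <;> simp <;> ring

lemma mem_ker_auxL (w0 w2 w3 w4 : ℝ) (X : Fin 5 → ℝ) :
    X ∈ LinearMap.ker (auxL w0 w2 w3 w4) ↔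
      X 1 = 0 ∧ w0 * X 0 - w2 * X 2 - w3 * X 3 - w4 * X 4 = 0 := by
  simp [auxL, LinearMap.mem_ker, funext_iff, Fin.forall_fin_two]

lemma auxL_surj (w0 w2 w3 w4 : ℝ) (h : w0 ≠ 0 ∨ w3 ≠ 0 ∨ w4 ≠ 0) :
    Function.Surjective (auxL w0 w2 w3 w4) := by
  intro y
  rcases h with h | h | h
  · exact ⟨![y 1 / w0, y 0, 0, 0, 0], by
      funext i; fin_cases i <;> simp [auxL] <;> field_simp⟩
  · exact ⟨![0, y 0, 0, -(y 1) / w3, 0], by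
      funext i; fin_cases i <;> simp [auxL] <;> field_simp⟩
  · exact ⟨![0, y 0, 0, 0, -(y 1) / w4], by
      funext i; fin_cases i <;> simp [auxL] <;> field_simp⟩

lemma mem_radg535 (l : ℝ) (F : Fin 5 → ℝ) (X : Fin 5 → ℝ) :
    X ∈ radg535 l F ↔ ∀ Y : Fin 5 → ℝ, F ⬝ᵥ bracketg535 l X Y = 0 := Iff.rfl

lemma dot_expand (l : ℝ) (F X Y : Fin 5 → ℝ) :
    F ⬝ᵥ bracketg535 l X Y =
      F 2 * ((X 0 * Y 1 - X 1 * Y 0) + l * (X 1 * Y 2 - X 2 * Y 1)) +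
      F 3 * ((X 1 * Y 3 - X 3 * Y 1) + (X 1 * Y 4 - X 4 * Y 1)) +
      F 4 * (X 1 * Y 4 - X 4 * Y 1) := by
  simp [bracketg535, dotProduct, Fin.sum_univ_five]

lemma BF_explicit (l : ℝ) (F : Fin 5 → ℝ) :
    BFg535 l F = !![0, F 2, 0, 0, 0;
      -F 2, 0, l * F 2, F 3, F 3 + F 4;
      0, -(l * F 2), 0, 0, 0;
      0, -F 3, 0, 0, 0;
      0, -(F 3 + F 4), 0, 0, 0] := by
  ext i j
  fin_cases i <;> fin_cases j <;>
    simp [BFg535, bracketg535, dotProduct, Fin.sum_univ_five, Pi.single_apply,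
      Matrix.vecHead, Matrix.vecTail] <;> try ring

/-- For every functional F, the skew-symmetric form B_F has rank 0 or 2; equivalently,
its radical {X | F([X, Y]) = 0 for all Y} has dimension 5 or 3 (the infinitesimal
MD-condition: every coadjoint orbit has dimension 0 or 2). -/
theorem md_condition_g535 (l : ℝ) (hl1 : l ≠ 1) (F : Fin 5 → ℝ) :
    ((BFg535 l F).rank = 0 ∨ (BFg535 l F).rank = 2) ∧
    (Module.finrank ℝ (radg535 l F) = 5 ∨ Module.finrank ℝ (radg535 l F) = 3) := by
  by_cases h : F 2 = 0 ∧ F 3 = 0 ∧ F 3 + F 4 = 0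
  · obtain ⟨h2, h3, h34⟩ := h
    have h4 : F 4 = 0 := by linarith
    constructor
    · left
      have hB0 : BFg535 l F = 0 := by
        rw [BF_explicit, h2, h3, h4]
        ext i j
        fin_cases i <;> fin_cases j <;>
          simp [Matrix.vecHead, Matrix.vecTail]
      rw [hB0, Matrix.rank_zero]
    · left
      have hrad : radg535 l F = ⊤ := by
        rw [Submodule.eq_top_iff']
        intro X Y
        rw [dot_expand, h2, h3, h4]
        ring
      rw [hrad, finrank_top]
      simp [Module.finrank_fin_fun]
  · rw [not_and_or, not_and_or] at h
    set L := auxL (F 2) (l * F 2) (F 3) (F 3 + F 4) with hL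
    have hrad : radg535 l F = LinearMap.ker L := by
      ext X
      rw [mem_radg535, hL, mem_ker_auxL]
      constructor
      · intro hX
        have h0 := hX ![1, 0, 0, 0, 0]
        have h1 := hX ![0, 1, 0, 0, 0]
        have h3 := hX ![0, 0, 0, 1, 0]
        have h4 := hX ![0, 0, 0, 0, 1]
        rw [dot_expand] at h0 h1 h3 h4
        norm_num [Matrix.cons_val_two, Matrix.cons_val_three, Matrix.cons_val_four,
          Matrix.head_cons, Matrix.tail_cons] at h0 h1 h3 h4
        have hX1 : X 1 = 0 := by
          rcases h with h | h | h
          · exact h0.resolve_left h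
          · exact h3.resolve_left h
          · have : (F 3 + F 4) * X 1 = 0 := by linear_combination h4
            exact (mul_eq_zero.mp this).resolve_left h
        exact ⟨hX1, by linear_combination h1⟩
      · rintro ⟨hX1, hφ⟩ Y
        rw [dot_expand]
        linear_combination (Y 1) * hφ +
          (-(F 2) * Y 0 + l * F 2 * Y 2 + F 3 * Y 3 + (F 3 + F 4) * Y 4) * hX1
    have hsurj : Function.Surjective L := by
      apply auxL_surj
      tauto
    have hkfin : Module.finrank ℝ (LinearMap.ker L) = 3 := by
      have h5 := LinearMap.finrank_range_add_finrank_ker L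
      rw [LinearMap.range_eq_top.mpr hsurj, finrank_top] at h5
      simp [Module.finrank_fin_fun] at h5
      omega
    constructor
    · right
      have hker : LinearMap.ker (BFg535 l F).mulVecLin = LinearMap.ker L := by
        ext X
        rw [LinearMap.mem_ker, hL, mem_ker_auxL, BF_explicit]
        constructor
        · intro hX
          have h0 := congrFun hX 0
          have h1 := congrFun hX 1
          have h3 := congrFun hX 3
          have h4 := congrFun hX 4
          simp [Matrix.mulVecLin_apply, Matrix.mulVec, dotProduct,
            Fin.sum_univ_five] at h0 h1 h3 h4
          have hX1 : X 1 = 0 := by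
            rcases h with hh | hh | hh
            · exact h0.resolve_left hh
            · exact h3.resolve_left hh
            · refine h4.resolve_left fun hc => hh ?_
              linarith
          exact ⟨hX1, by linear_combination -h1⟩
        · rintro ⟨hX1, hφ⟩
          funext i
          fin_cases i <;>
            simp [Matrix.mulVecLin_apply, Matrix.mulVec, dotProduct,
              Fin.sum_univ_five, hX1] <;>
            linear_combination -hφ
      have h6 := LinearMap.finrank_range_add_finrank_ker (BFg535 l F).mulVecLin
      rw [hker, hkfin] at h6
      simp [Module.finrank_fin_fun] at h6
      rw [Matrix.rank]
      omega
    · right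
      rw [hrad, hkfin]
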